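/- Let h ≥ 8 be a real number. Let (x_k)_{k≥0} be an increasing sequence of negative reals, set t_k = exp(x_k) ∈ (0,1), let (β_k)_{k≥1} be an increasing sequence of positive reals and (a_k)_{k≥1} positive reals, and set ℓ_k(x) = log a_k + β_k·x for x < 0. Assume: (1) ℓ_{k+1}(x) ≥ ℓ_k(x) + h for all x ∈ [x_{k+1}, 0) and all k ≥ 1; (2) ℓ_{k+1}(x) ≥ ℓ_k(x) for all x ∈ [x_k, x_{k+1}) and all k ≥ 1; (3) a_m·r^{β_m} ≤ a_k·r^{β_k}·e^{−h(m−k−1)} for all m > k and r ∈ [t_{k−1}, t_k]. Let (ν_k)_{k≥1} be a non-increasing sequence of positive reals with ν_k ≥ 1/k for all k and ν_m ≤ (k/m)·ν_k whenever m ≤ k. Then for every integer k ≥ 1 and every r ∈ [t_{k−1}, t_k]: Σ_{m≥1, |m−k|≥2} ν_m·a_m·r^{β_m} ≤ (1/2)·ν_k·a_k·r^{β_k}. -/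
import Mathlib

private lemma aux_exp5 : (18 : ℝ) ≤ Real.exp 5 := by
  have hexp1 : (2 : ℝ) ≤ Real.exp 1 := by linarith [Real.add_one_le_exp (1 : ℝ)]
  have hexp2 : (3 : ℝ) ≤ Real.exp 2 := by linarith [Real.add_one_le_exp (2 : ℝ)]
  have h55 : Real.exp 5 = Real.exp 2 * Real.exp 2 * Real.exp 1 := by
    rw [← Real.exp_add, ← Real.exp_add]; norm_num
  nlinarith [Real.exp_pos (2 : ℝ)]

private lemma aux_expm5 : Real.exp (-5) ≤ 1 / 8 := by
  have hmul : Real.exp (-5) * Real.exp 5 = 1 := by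
    rw [← Real.exp_add]; norm_num
  nlinarith [Real.exp_pos (-5 : ℝ), aux_exp5]

private lemma aux_expm7 : Real.exp (-7) ≤ 1 / 2 := by
  have hexp7 : (8 : ℝ) ≤ Real.exp 7 := by linarith [Real.add_one_le_exp (7 : ℝ)]
  have hmul : Real.exp (-7) * Real.exp 7 = 1 := by
    rw [← Real.exp_add]; norm_num
  nlinarith [Real.exp_pos (-7 : ℝ)]


/-- (The Claim, condition (IV), in the proof of Theorem 1.1.) Let
`h ≥ 8`, `(x_k)_{k≥0}` increasing negative reals, `t_k = exp x_k`, `(β_k)_{k≥1}`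
increasing positive, `(a_k)_{k≥1}` positive, `ℓ_k(x) = log a_k + β_k x`. Assume
(1) `ℓ_{k+1}(x) ≥ ℓ_k(x) + h` on `[x_{k+1},0)`, (2) `ℓ_{k+1}(x) ≥ ℓ_k(x)` on
`[x_k, x_{k+1})`, (3) `a_m r^{β_m} ≤ a_k r^{β_k} e^{-h(m-k-1)}` for `m > k` and
`r ∈ [t_{k-1}, t_k]`. Let `(ν_k)` be non-increasing positive with `ν_k ≥ 1/k` and
`ν_m ≤ (k/m) ν_k` for `m ≤ k`. Then for every `k ≥ 1` and `r ∈ [t_{k-1}, t_k]`: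
`Σ_{m≥1, |m-k|≥2} ν_m a_m r^{β_m} ≤ (1/2) ν_k a_k r^{β_k}`. -/
theorem claim_condition_IV
    (h : ℝ) (hh : 8 ≤ h)
    (x : ℕ → ℝ) (hxmono : StrictMono x) (hxneg : ∀ k, x k < 0)
    (t : ℕ → ℝ) (ht : ∀ k, t k = Real.exp (x k))
    (β : ℕ → ℝ) (hβmono : ∀ k : ℕ, 1 ≤ k → β k < β (k + 1))
    (hβpos : ∀ k : ℕ, 1 ≤ k → 0 < β k)
    (a : ℕ → ℝ) (hapos : ∀ k : ℕ, 1 ≤ k → 0 < a k)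
    (l : ℕ → ℝ → ℝ) (hl : ∀ k : ℕ, ∀ y : ℝ, l k y = Real.log (a k) + β k * y)
    (h1 : ∀ k : ℕ, 1 ≤ k → ∀ y : ℝ, x (k + 1) ≤ y → y < 0 → l k y + h ≤ l (k + 1) y)
    (h2 : ∀ k : ℕ, 1 ≤ k → ∀ y : ℝ, x k ≤ y → y < x (k + 1) → l k y ≤ l (k + 1) y)
    (h3 : ∀ m k : ℕ, 1 ≤ k → k < m → ∀ r : ℝ, t (k - 1) ≤ r → r ≤ t k →
      a m * r ^ β m ≤ a k * r ^ β k * Real.exp (-h * ((m : ℝ) - (k : ℝ) - 1)))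
    (ν : ℕ → ℝ) (hνpos : ∀ k : ℕ, 1 ≤ k → 0 < ν k)
    (hνdec : ∀ k : ℕ, 1 ≤ k → ν (k + 1) ≤ ν k)
    (hνk : ∀ k : ℕ, 1 ≤ k → 1 / (k : ℝ) ≤ ν k)
    (hνratio : ∀ m k : ℕ, 1 ≤ m → m ≤ k → ν m ≤ (k : ℝ) / (m : ℝ) * ν k) :
    ∀ k : ℕ, 1 ≤ k → ∀ r : ℝ, t (k - 1) ≤ r → r ≤ t k →
      ∑' m : {m : ℕ // 1 ≤ m ∧ 2 ≤ |(m : ℤ) - (k : ℤ)|},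
        ν m.1 * a m.1 * r ^ β m.1 ≤ 1 / 2 * (ν k * a k * r ^ β k) := by
  intro k hk r hr1 hr2
  have htpos : 0 < t (k - 1) := by rw [ht]; exact Real.exp_pos _
  have hrpos : 0 < r := lt_of_lt_of_le htpos hr1
  set y := Real.log r with hydef
  have hy2 : y ≤ x k := by
    have h' : Real.log r ≤ Real.log (t k) := Real.log_le_log hrpos hr2
    rwa [ht, Real.log_exp] at h'
  have hy1 : x (k - 1) ≤ y := by
    have h' : Real.log (t (k - 1)) ≤ Real.log r := Real.log_le_log htpos hr1
    rwa [ht, Real.log_exp] at h'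
  have hy0 : y < 0 := lt_of_le_of_lt hy2 (hxneg k)
  -- a m * r ^ β m = exp (l m y)
  have hrb : ∀ m : ℕ, 1 ≤ m → a m * r ^ β m = Real.exp (l m y) := by
    intro m hm
    rw [hl, Real.exp_add, Real.exp_log (hapos m hm), Real.rpow_def_of_pos hrpos,
      mul_comm (Real.log r) (β m)]
  -- ν is antitone
  have hνanti : ∀ n p : ℕ, 1 ≤ n → n ≤ p → ν p ≤ ν n := by
    intro n p hn hnp
    induction p, hnp using Nat.le_induction with
    | base => exact le_refl _
    | succ p hp ih => exact le_trans (hνdec p (le_trans hn hp)) ih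
  -- chain of h1
  have chain : ∀ d n : ℕ, 1 ≤ n → n + d + 1 ≤ k → l n y + h * d ≤ l (n + d) y := by
    intro d
    induction d with
    | zero => intro n hn _; simp
    | succ d ih =>
      intro n hn hnk
      have hx1 : x (n + 1) ≤ y := by
        refine le_trans ?_ hy1
        exact hxmono.monotone (by omega)
      have hstep := h1 n hn y hx1 hy0
      have hih := ih (n + 1) (by omega) (by omega)
      have hrw : n + 1 + d = n + (d + 1) := by omega
      rw [hrw] at hih
      push_cast
      linarith
  -- last step : l (k-1) y ≤ l k y (for k ≥ 2)
  have last : 2 ≤ k → l (k - 1) y ≤ l k y := by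
    intro hk2
    have hk1 : 1 ≤ k - 1 := by omega
    have hkk : k - 1 + 1 = k := by omega
    rcases lt_or_ge y (x k) with hyk | hyk
    · have := h2 (k - 1) hk1 y hy1 (by rwa [hkk])
      rwa [hkk] at this
    · have := h1 (k - 1) hk1 y (by rwa [hkk]) hy0
      rw [hkk] at this
      linarith
  -- lower-side bound
  have lemA : ∀ m : ℕ, 1 ≤ m → m + 2 ≤ k →
      a m * r ^ β m ≤ a k * r ^ β k * Real.exp (-h * ((k : ℝ) - (m : ℝ) - 1)) := by
    intro m hm hmk
    have hc := chain (k - 1 - m) m hm (by omega)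
    have hml : m + (k - 1 - m) = k - 1 := by omega
    rw [hml] at hc
    have hlast := last (by omega)
    have hcast : ((k - 1 - m : ℕ) : ℝ) = (k : ℝ) - (m : ℝ) - 1 := by
      have e1 : k - 1 - m = k - (m + 1) := by omega
      rw [e1, Nat.cast_sub (by omega)]
      push_cast
      ring
    rw [hcast] at hc
    rw [hrb m hm, hrb k hk, ← Real.exp_add]
    apply Real.exp_le_exp.mpr
    nlinarith [hc, hlast]
  -- positivity
  have hDpos : 0 < ν k * a k * r ^ β k :=
    mul_pos (mul_pos (hνpos k hk) (hapos k hk)) (Real.rpow_pos_of_pos hrpos _)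
  set D := ν k * a k * r ^ β k with hDdef
  set q := Real.exp (-7) with hqdef
  have hq0 : 0 < q := Real.exp_pos _
  have hqpow : ∀ d : ℕ, q ^ d = Real.exp (-7 * (d : ℝ)) := by
    intro d
    rw [hqdef, ← Real.exp_nat_mul]
    congr 1
    ring
  have hAk : 0 < a k * r ^ β k := mul_pos (hapos k hk) (Real.rpow_pos_of_pos hrpos _)
  -- key pointwise bound
  have key : ∀ m : ℕ, 1 ≤ m → 2 ≤ |(m : ℤ) - (k : ℤ)| →
      ν m * a m * r ^ β m ≤ D * Real.exp 9 * q ^ ((m : ℤ) - (k : ℤ)).natAbs := by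
    intro m hm habs
    have habs' : 2 ≤ ((m : ℤ) - (k : ℤ)).natAbs := by
      rw [Int.abs_eq_natAbs] at habs
      exact_mod_cast habs
    set d : ℕ := ((m : ℤ) - (k : ℤ)).natAbs with hddef
    rw [hqpow d]
    have hmpos : 0 < a m * r ^ β m := mul_pos (hapos m hm) (Real.rpow_pos_of_pos hrpos _)
    rcases lt_or_ge m k with hmk | hkm
    · -- m ≤ k - 2
      have hd : (d : ℝ) = (k : ℝ) - (m : ℝ) := by
        have : d = k - m := by omega
        rw [this, Nat.cast_sub (by omega)]
      have hm2 : m + 2 ≤ k := by omega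
      have hb2 := lemA m hm hm2
      -- ν m ≤ (d+1) * ν k
      have hb1 : ν m ≤ ((d : ℝ) + 1) * ν k := by
        have hr := hνratio m k hm (by omega)
        have hmr : (0 : ℝ) < (m : ℝ) := by exact_mod_cast hm
        have hdiv : (k : ℝ) / (m : ℝ) ≤ (d : ℝ) + 1 := by
          rw [div_le_iff₀ hmr]
          have hk' : (m : ℝ) ≤ (k : ℝ) := by exact_mod_cast hmk.le
          have hm1 : (1 : ℝ) ≤ (m : ℝ) := by exact_mod_cast hm
          nlinarith [hd, mul_nonneg (by linarith : (0:ℝ) ≤ (m:ℝ) - 1)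
            (by linarith : (0:ℝ) ≤ (k:ℝ) - (m:ℝ))]
        calc ν m ≤ (k : ℝ) / (m : ℝ) * ν k := hr
          _ ≤ ((d : ℝ) + 1) * ν k := by
              exact mul_le_mul_of_nonneg_right hdiv (hνpos k hk).le
      have hsub : ((d : ℝ) + 1) * Real.exp (-h * ((k : ℝ) - (m : ℝ) - 1)) ≤
          Real.exp (-7 * (d : ℝ)) * Real.exp 9 := by
        have e1 : (d : ℝ) + 1 ≤ Real.exp (d : ℝ) := by
          linarith [Real.add_one_le_exp (d : ℝ)]
        have e2 : Real.exp (-h * ((k : ℝ) - (m : ℝ) - 1)) ≤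
            Real.exp (-8 * ((d : ℝ) - 1)) := by
          apply Real.exp_le_exp.mpr
          rw [← hd]
          have hd2 : (2:ℝ) ≤ (d:ℝ) := by exact_mod_cast habs'
          nlinarith [mul_nonneg (by linarith : (0:ℝ) ≤ h - 8)
            (by linarith : (0:ℝ) ≤ (d:ℝ) - 1)]
        calc ((d : ℝ) + 1) * Real.exp (-h * ((k : ℝ) - (m : ℝ) - 1))
            ≤ Real.exp (d : ℝ) * Real.exp (-8 * ((d : ℝ) - 1)) := by
              apply mul_le_mul e1 e2 (Real.exp_pos _).le (Real.exp_pos _).le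
          _ = Real.exp ((d : ℝ) + -8 * ((d : ℝ) - 1)) := by rw [← Real.exp_add]
          _ ≤ Real.exp (-7 * (d : ℝ)) * Real.exp 9 := by
              rw [← Real.exp_add]
              apply Real.exp_le_exp.mpr
              linarith
      calc ν m * a m * r ^ β m = ν m * (a m * r ^ β m) := by ring
        _ ≤ (((d : ℝ) + 1) * ν k) * (a k * r ^ β k * Real.exp (-h * ((k : ℝ) - (m : ℝ) - 1))) := by
            apply mul_le_mul hb1 hb2 hmpos.le
            exact mul_nonneg (by positivity) (hνpos k hk).le
        _ = (ν k * (a k * r ^ β k)) * (((d : ℝ) + 1) * Real.exp (-h * ((k : ℝ) - (m : ℝ) - 1))) := by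
            ring
        _ ≤ (ν k * (a k * r ^ β k)) * (Real.exp (-7 * (d : ℝ)) * Real.exp 9) := by
            apply mul_le_mul_of_nonneg_left hsub
            exact mul_nonneg (hνpos k hk).le hAk.le
        _ = D * Real.exp 9 * Real.exp (-7 * (d : ℝ)) := by rw [hDdef]; ring
    · -- m ≥ k + 2
      have hd : (d : ℝ) = (m : ℝ) - (k : ℝ) := by
        have : d = m - k := by omega
        rw [this, Nat.cast_sub (by omega)]
      have hkm2 : k + 2 ≤ m := by omega
      have hb1 : ν m ≤ ν k := hνanti k m hk (by omega)
      have hb2 := h3 m k hk (by omega) r hr1 hr2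
      have hsub : Real.exp (-h * ((m : ℝ) - (k : ℝ) - 1)) ≤
          Real.exp (-7 * (d : ℝ)) * Real.exp 9 := by
        rw [← Real.exp_add]
        apply Real.exp_le_exp.mpr
        have hd2 : (2 : ℝ) ≤ (d : ℝ) := by exact_mod_cast habs'
        rw [← hd]
        nlinarith
      calc ν m * a m * r ^ β m = ν m * (a m * r ^ β m) := by ring
        _ ≤ ν k * (a k * r ^ β k * Real.exp (-h * ((m : ℝ) - (k : ℝ) - 1))) := by
            apply mul_le_mul hb1 hb2 hmpos.le (hνpos k hk).le
        _ ≤ ν k * (a k * r ^ β k * (Real.exp (-7 * (d : ℝ)) * Real.exp 9)) := by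
            apply mul_le_mul_of_nonneg_left _ (hνpos k hk).le
            exact mul_le_mul_of_nonneg_left hsub hAk.le
        _ = D * Real.exp 9 * Real.exp (-7 * (d : ℝ)) := by rw [hDdef]; ring
  -- the dominating function on Bool × ℕ
  set C := D * Real.exp 9 * q ^ 2 with hCdef
  have hCpos : 0 < C := by positivity
  set g : Bool × ℕ → ℝ := fun p => C * q ^ p.2 with hgdef
  have hq1 : q < 1 := by
    rw [hqdef]
    have := Real.exp_lt_exp.mpr (show (-7 : ℝ) < 0 by norm_num)
    simpa using this
  have hgeom : Summable (fun n : ℕ => q ^ n) := summable_geometric_of_lt_one hq0.le hq1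
  have hgsum : Summable g := by
    have hb : Summable (fun _ : Bool => C) := Summable.of_finite
    exact hb.mul_of_nonneg hgeom (fun _ => hCpos.le) (fun n => pow_nonneg hq0.le n)
  -- injection from the index set
  set S := {m : ℕ // 1 ≤ m ∧ 2 ≤ |(m : ℤ) - (k : ℤ)|} with hSdef
  set i : S → Bool × ℕ := fun m => (decide (m.1 < k), ((m.1 : ℤ) - (k : ℤ)).natAbs - 2)
    with hidef
  have habs' : ∀ m : S, 2 ≤ ((m.1 : ℤ) - (k : ℤ)).natAbs := by
    intro m
    have := m.2.2
    rw [Int.abs_eq_natAbs] at this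
    exact_mod_cast this
  have hinj : Function.Injective i := by
    intro m₁ m₂ he
    rw [hidef] at he
    have hb := congrArg Prod.fst he
    have hn := congrArg Prod.snd he
    simp only [decide_eq_decide] at hb
    simp only at hn
    have h1' := habs' m₁
    have h2' := habs' m₂
    apply Subtype.ext
    omega
  -- pointwise bound f ≤ g ∘ i
  have hpt : ∀ m : S, ν m.1 * a m.1 * r ^ β m.1 ≤ g (i m) := by
    intro m
    have hd := habs' m
    have : g (i m) = D * Real.exp 9 * q ^ ((m.1 : ℤ) - (k : ℤ)).natAbs := by
      rw [hgdef, hidef]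
      simp only
      rw [hCdef, mul_assoc, ← pow_add]
      congr 2
      omega
    rw [this]
    exact key m.1 m.2.1 m.2.2
  have hfnonneg : ∀ m : S, 0 ≤ ν m.1 * a m.1 * r ^ β m.1 := by
    intro m
    have := mul_pos (mul_pos (hνpos m.1 m.2.1) (hapos m.1 m.2.1))
      (Real.rpow_pos_of_pos hrpos (β m.1))
    exact this.le
  have hfsum : Summable (fun m : S => ν m.1 * a m.1 * r ^ β m.1) :=
    Summable.of_nonneg_of_le hfnonneg hpt (hgsum.comp_injective hinj)
  have hmain : ∑' m : S, ν m.1 * a m.1 * r ^ β m.1 ≤ ∑' p, g p :=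
    Summable.tsum_le_tsum_of_inj i hinj
      (fun p _ => le_of_lt (mul_pos hCpos (pow_pos hq0 p.2))) hpt hfsum hgsum
  -- compute the tsum of g
  have hinner : ∀ b : Bool, Summable (fun n : ℕ => g (b, n)) := by
    intro b
    exact hgeom.mul_left C
  have hgval : ∑' p, g p = 2 * (C * (1 - q)⁻¹) := by
    rw [Summable.tsum_prod' hgsum hinner]
    have : ∀ b : Bool, ∑' n : ℕ, g (b, n) = C * (1 - q)⁻¹ := by
      intro b
      rw [hgdef]
      simp only
      rw [tsum_mul_left, tsum_geometric_of_lt_one hq0.le hq1]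
    simp only [this]
    rw [tsum_fintype]
    simp [two_mul]
  -- numeric estimate
  have hq14 : q ^ 2 = Real.exp (-14) := by
    rw [hqdef, pow_two, ← Real.exp_add]
    norm_num
  have hqhalf : q ≤ 1 / 2 := by rw [hqdef]; exact aux_expm7
  have hinv : (1 - q)⁻¹ ≤ 2 := by
    have h1q : (0 : ℝ) < 1 - q := by linarith
    rw [inv_le_iff_one_le_mul₀ h1q]
    linarith
  have hCval : C = D * Real.exp (-5) := by
    rw [hCdef, hq14, mul_assoc, ← Real.exp_add]
    norm_num
  have hexpm5 : Real.exp (-5) ≤ 1 / 8 := aux_expm5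
  have hfinal : 2 * (C * (1 - q)⁻¹) ≤ 1 / 2 * D := by
    have hCD : C ≤ D * (1 / 8) := by
      rw [hCval]
      exact mul_le_mul_of_nonneg_left hexpm5 hDpos.le
    have hinvpos : (0 : ℝ) < (1 - q)⁻¹ := by
      apply inv_pos.mpr; linarith
    have hkey : C * (1 - q)⁻¹ ≤ D * (1 / 8) * 2 :=
      mul_le_mul hCD hinv hinvpos.le ((mul_pos hDpos (by norm_num : (0:ℝ) < 1/8)).le)
    linarith
  calc ∑' m : S, ν m.1 * a m.1 * r ^ β m.1 ≤ ∑' p, g p := hmain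
    _ = 2 * (C * (1 - q)⁻¹) := hgval
    _ ≤ 1 / 2 * D := hfinal
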